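/- arXiv:1302.3831 — 3 statements merged into one kernel-verified Lean document; each statement's English description precedes it below -/
import Mathlib

section
/- Let V be a unitary operator on ℂ⁴ and let {a₁, a₂}, {b₁, b₂}, {b'₁, b'₂} be orthonormal bases of ℂ². Define ab_{ij} = V⁻¹(aᵢ ⊗ bⱼ) and ab'_{ij} = V⁻¹(aᵢ ⊗ b'ⱼ) (the eigenbases of the product measurements AB and AB' with respect to V), let U be the unique linear operator on ℂ⁴ with U ab_{ij} = ab'_{ij} for all i, j, and let W be the unique linear operator on ℂ² with W bⱼ = b'ⱼ for j = 1, 2. Then U is unitary and V ∘ U ∘ V⁻¹ = 𝟙 ⊗ W, i.e. for all u, v ∈ ℂ², (V ∘ U ∘ V⁻¹)(u ⊗ v) = u ⊗ (W v). In other words, if two coincidence measurements AB and AB' are product measurements with respect to the same isomorphism, then the dynamical evolution connecting them is a product evolution with respect to that isomorphism. -/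
open scoped InnerProductSpace

noncomputable section

/-- Tensor product `u ⊗ v` of two vectors of ℂ², as a vector of ℂ⁴ (the model of ℂ²⊗ℂ²):
`(u ⊗ v)(i,j) = u i * v j`. -/
def tp (u v : EuclideanSpace ℂ (Fin 2)) : EuclideanSpace ℂ (Fin 2 × Fin 2) :=
  WithLp.toLp 2 (fun p : Fin 2 × Fin 2 => u p.1 * v p.2)

lemma inner_tp (u v u' v' : EuclideanSpace ℂ (Fin 2)) :
    ⟪tp u v, tp u' v'⟫_ℂ = ⟪u, u'⟫_ℂ * ⟪v, v'⟫_ℂ := by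
  simp only [PiLp.inner_apply, RCLike.inner_apply, tp, WithLp.ofLp_toLp, Fintype.sum_prod_type, map_mul]
  rw [Finset.sum_mul_sum]
  congr 1; ext i; congr 1; ext j; ring

/-- tp as a bilinear map -/
def tpL : EuclideanSpace ℂ (Fin 2) →ₗ[ℂ] EuclideanSpace ℂ (Fin 2) →ₗ[ℂ]
    EuclideanSpace ℂ (Fin 2 × Fin 2) :=
  LinearMap.mk₂ ℂ tp
    (fun u u' v => by ext p; simp [tp]; ring)
    (fun c u v => by ext p; simp [tp]; ring)
    (fun u v v' => by ext p; simp [tp]; ring)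
    (fun c u v => by ext p; simp [tp]; ring)

lemma tpL_apply (u v : EuclideanSpace ℂ (Fin 2)) : tpL u v = tp u v := rfl

/-- if the coincidence measurements `AB` (eigenbasis `ab_{ij} = V⁻¹(aᵢ⊗bⱼ)`)
and `AB'` (eigenbasis `ab'_{ij} = V⁻¹(aᵢ⊗b'ⱼ)`) are both product measurements with respect
to the same isomorphism `V`, then the dynamical evolution `U` connecting them
(`U ab_{ij} = ab'_{ij}`) is unitary (it preserves inner products and is bijective) and is a
product evolution with respect to `V`: `V ∘ U ∘ V⁻¹ = 𝟙 ⊗ W` where `W bⱼ = b'ⱼ`, i.e.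
`(V ∘ U ∘ V⁻¹)(u ⊗ v) = u ⊗ (W v)` for all `u, v ∈ ℂ²`. -/
theorem product_measurements_implies_product_evolution
    (V : EuclideanSpace ℂ (Fin 2 × Fin 2) ≃ₗᵢ[ℂ] EuclideanSpace ℂ (Fin 2 × Fin 2))
    (a b b' : Fin 2 → EuclideanSpace ℂ (Fin 2))
    (ha : Orthonormal ℂ a) (hb : Orthonormal ℂ b) (hb' : Orthonormal ℂ b')
    (U : EuclideanSpace ℂ (Fin 2 × Fin 2) →ₗ[ℂ] EuclideanSpace ℂ (Fin 2 × Fin 2))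
    (hU : ∀ i j : Fin 2, U (V.symm (tp (a i) (b j))) = V.symm (tp (a i) (b' j)))
    (W : EuclideanSpace ℂ (Fin 2) →ₗ[ℂ] EuclideanSpace ℂ (Fin 2))
    (hW : ∀ j : Fin 2, W (b j) = b' j) :
    (∀ x y : EuclideanSpace ℂ (Fin 2 × Fin 2), ⟪U x, U y⟫_ℂ = ⟪x, y⟫_ℂ) ∧
    Function.Bijective U ∧
    (∀ u v : EuclideanSpace ℂ (Fin 2), V (U (V.symm (tp u v))) = tp u (W v)) := by
  -- orthonormal families in ℂ⁴
  set f : Fin 2 × Fin 2 → EuclideanSpace ℂ (Fin 2 × Fin 2) :=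
    fun p => V.symm (tp (a p.1) (b p.2)) with hf
  set f' : Fin 2 × Fin 2 → EuclideanSpace ℂ (Fin 2 × Fin 2) :=
    fun p => V.symm (tp (a p.1) (b' p.2)) with hf'
  have honb : ∀ (c : Fin 2 → EuclideanSpace ℂ (Fin 2)), Orthonormal ℂ c →
      Orthonormal ℂ (fun p : Fin 2 × Fin 2 => V.symm (tp (a p.1) (c p.2))) := by
    intro c hc
    rw [orthonormal_iff_ite]
    intro p q
    rw [LinearIsometryEquiv.inner_map_map, inner_tp,
      orthonormal_iff_ite.mp ha, orthonormal_iff_ite.mp hc]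
    by_cases h1 : p.1 = q.1 <;> by_cases h2 : p.2 = q.2 <;>
      simp [h1, h2, Prod.ext_iff]
  have honf : Orthonormal ℂ f := honb b hb
  have honf' : Orthonormal ℂ f' := honb b' hb'
  have hcard : Fintype.card (Fin 2 × Fin 2) =
      Module.finrank ℂ (EuclideanSpace ℂ (Fin 2 × Fin 2)) := by simp
  let Bb := basisOfOrthonormalOfCardEqFinrank honf hcard
  let Bb' := basisOfOrthonormalOfCardEqFinrank honf' hcard
  have hBb : ⇑Bb = f := coe_basisOfOrthonormalOfCardEqFinrank honf hcard
  have hBb' : ⇑Bb' = f' := coe_basisOfOrthonormalOfCardEqFinrank honf' hcard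
  have honBb : Orthonormal ℂ ⇑Bb := hBb.symm ▸ honf
  have honBb' : Orthonormal ℂ ⇑Bb' := hBb'.symm ▸ honf'
  let E := honBb.equiv honBb' (Equiv.refl _)
  have hUE : U = E.toLinearEquiv.toLinearMap := by
    apply Bb.ext
    intro p
    have h1 : Bb p = f p := by rw [hBb]
    have h2 : E (Bb p) = Bb' p := honBb.equiv_apply honBb' (Equiv.refl _) p
    have h3 : Bb' p = f' p := by rw [hBb']
    have h4 : (E.toLinearEquiv.toLinearMap : _ →ₗ[ℂ] _) (Bb p) = E (Bb p) := rfl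
    rw [h4, h2, h3, h1]
    simp [f, f', hU]
  refine ⟨?_, ?_, ?_⟩
  · intro x y; rw [hUE]; exact E.inner_map_map x y
  · rw [hUE]; exact E.bijective
  · -- bilinear extension
    have key : ∀ i j, V (U (V.symm (tpL (a i) (b j)))) = tpL (a i) (b' j) := by
      intro i j
      rw [tpL_apply, hU]
      simp [tpL_apply]
    intro u v
    let Ba := basisOfOrthonormalOfCardEqFinrank ha (by simp)
    let Bb2 := basisOfOrthonormalOfCardEqFinrank hb (by simp)
    have hBa : ⇑Ba = a := coe_basisOfOrthonormalOfCardEqFinrank ha (by simp)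
    have hBb2 : ⇑Bb2 = b := coe_basisOfOrthonormalOfCardEqFinrank hb (by simp)
    have hu : u = ∑ i, Ba.repr u i • a i := by
      conv_lhs => rw [← Ba.sum_repr u]
      simp [hBa]
    have hv : v = ∑ j, Bb2.repr v j • b j := by
      conv_lhs => rw [← Bb2.sum_repr v]
      simp [hBb2]
    set c : Fin 2 → ℂ := fun i => Ba.repr u i with hc
    set d : Fin 2 → ℂ := fun j => Bb2.repr v j with hd
    have hux : ∀ x, tpL u x = ∑ i, c i • tpL (a i) x := by
      intro x
      have : tpL u = ∑ i, c i • tpL (a i) := by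
        conv_lhs => rw [hu]
        rw [map_sum]
        exact Finset.sum_congr rfl fun i _ => by rw [map_smul]
      rw [this]
      simp
    have hax : ∀ i, tpL (a i) v = ∑ j, d j • tpL (a i) (b j) := by
      intro i
      conv_lhs => rw [hv]
      rw [map_sum]
      exact Finset.sum_congr rfl fun j _ => by rw [map_smul]
    have hWv : W v = ∑ j, d j • b' j := by
      conv_lhs => rw [hv]
      rw [map_sum]
      exact Finset.sum_congr rfl fun j _ => by rw [map_smul, hW]
    calc V (U (V.symm (tp u v)))
        = ∑ i, c i • V (U (V.symm (tpL (a i) v))) := by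
          rw [← tpL_apply, hux v]
          simp only [map_sum, map_smul, LinearIsometryEquiv.map_smul]
      _ = ∑ i, c i • ∑ j, d j • tpL (a i) (b' j) := by
          refine Finset.sum_congr rfl fun i _ => ?_
          rw [hax]
          simp only [map_sum, map_smul, LinearIsometryEquiv.map_smul, key]
      _ = tp u (W v) := by
          rw [← tpL_apply, hux (W v)]
          refine Finset.sum_congr rfl fun i _ => ?_
          rw [hWv, map_sum]
          congr 1
          exact Finset.sum_congr rfl fun j _ => by rw [map_smul]

end
end

section
/- Let V be a unitary operator on ℂ⁴, let {a₁, a₂}, {b₁, b₂}, {b'₁, b'₂} be orthonormal bases of ℂ², and let p ∈ ℂ⁴. Then for each i ∈ {1,2}, |⟨V⁻¹(aᵢ ⊗ b₁), p⟩|² + |⟨V⁻¹(aᵢ ⊗ b₂), p⟩|² = |⟨V⁻¹(aᵢ ⊗ b'₁), p⟩|² + |⟨V⁻¹(aᵢ ⊗ b'₂), p⟩|². In other words, if two coincidence measurements AB and AB' are product measurements with respect to the same isomorphism, then the marginal law is satisfied for the probabilities connected to these measurements in any state p. -/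
open scoped InnerProductSpace

noncomputable section

lemma parseval_two (c : Fin 2 → EuclideanSpace ℂ (Fin 2)) (hc : Orthonormal ℂ c)
    (w : EuclideanSpace ℂ (Fin 2)) :
    ‖⟪c 0, w⟫_ℂ‖ ^ 2 + ‖⟪c 1, w⟫_ℂ‖ ^ 2 = ‖w‖ ^ 2 := by
  let B : Module.Basis (Fin 2) ℂ (EuclideanSpace ℂ (Fin 2)) :=
    basisOfOrthonormalOfCardEqFinrank hc (by simp)
  have hB : ⇑B = c := coe_basisOfOrthonormalOfCardEqFinrank hc (by simp)
  let O : OrthonormalBasis (Fin 2) ℂ (EuclideanSpace ℂ (Fin 2)) :=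
    B.toOrthonormalBasis (by rwa [hB])
  have hO : ⇑O = c := by
    rw [show ⇑O = ⇑B from Module.Basis.coe_toOrthonormalBasis _ _, hB]
  have h1 : ∀ j, ⟪c j, w⟫_ℂ = O.repr w j := by
    intro j; rw [← hO]; exact (O.repr_apply_apply w j).symm
  have h2 : ‖w‖ ^ 2 = ∑ j : Fin 2, ‖O.repr w j‖ ^ 2 := by
    rw [← O.repr.norm_map w]
    rw [EuclideanSpace.norm_eq]
    rw [Real.sq_sqrt (by positivity)]
  simp [h1, h2, Fin.sum_univ_two]

lemma inner_tp_s5 (u v : EuclideanSpace ℂ (Fin 2)) (q : EuclideanSpace ℂ (Fin 2 × Fin 2)) :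
    ⟪tp u v, q⟫_ℂ =
      ⟪v, (WithLp.toLp 2 (fun k => ∑ l : Fin 2, (starRingEnd ℂ) (u l) * q (l, k)) :
        EuclideanSpace ℂ (Fin 2))⟫_ℂ := by
  simp only [PiLp.inner_apply, RCLike.inner_apply, tp, PiLp.toLp_apply]
  rw [Fintype.sum_prod_type]
  rw [Finset.sum_comm]
  simp only [Finset.mul_sum, Finset.sum_mul, map_mul]
  refine Finset.sum_congr rfl (fun k _ => Finset.sum_congr rfl (fun l _ => ?_)); ring

/-- if the coincidence measurements `AB` (eigenbasis `V⁻¹(aᵢ⊗bⱼ)`) and `AB'`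
(eigenbasis `V⁻¹(aᵢ⊗b'ⱼ)`) are product measurements with respect to the same isomorphism `V`,
then the marginal law holds in any state `p`:
`|⟨V⁻¹(aᵢ⊗b₁), p⟩|² + |⟨V⁻¹(aᵢ⊗b₂), p⟩|² = |⟨V⁻¹(aᵢ⊗b'₁), p⟩|² + |⟨V⁻¹(aᵢ⊗b'₂), p⟩|²`. -/
theorem product_measurements_satisfy_marginal_law
    (V : EuclideanSpace ℂ (Fin 2 × Fin 2) ≃ₗᵢ[ℂ] EuclideanSpace ℂ (Fin 2 × Fin 2))
    (a b b' : Fin 2 → EuclideanSpace ℂ (Fin 2))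
    (ha : Orthonormal ℂ a) (hb : Orthonormal ℂ b) (hb' : Orthonormal ℂ b')
    (p : EuclideanSpace ℂ (Fin 2 × Fin 2)) :
    ∀ i : Fin 2,
      ‖⟪V.symm (tp (a i) (b 0)), p⟫_ℂ‖ ^ 2 + ‖⟪V.symm (tp (a i) (b 1)), p⟫_ℂ‖ ^ 2 =
        ‖⟪V.symm (tp (a i) (b' 0)), p⟫_ℂ‖ ^ 2 + ‖⟪V.symm (tp (a i) (b' 1)), p⟫_ℂ‖ ^ 2 := by
  intro i
  have key : ∀ x, ⟪V.symm x, p⟫_ℂ = ⟪x, V p⟫_ℂ := by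
    intro x
    rw [← V.inner_map_map (V.symm x) p, V.apply_symm_apply]
  set w : EuclideanSpace ℂ (Fin 2) :=
    WithLp.toLp 2 (fun k => ∑ l : Fin 2, (starRingEnd ℂ) (a i l) * (V p) (l, k)) with hw
  have hv : ∀ v : EuclideanSpace ℂ (Fin 2), ⟪V.symm (tp (a i) v), p⟫_ℂ = ⟪v, w⟫_ℂ := by
    intro v
    rw [key, inner_tp_s5]
  rw [hv, hv, hv, hv, parseval_two b hb w, parseval_two b' hb' w]

end
end

section
/- There do not exist a unitary operator V on ℂ⁴, orthonormal bases {a₁, a₂}, {b₁, b₂} of ℂ², unit vectors p_a, p_b ∈ ℂ², an orthonormal basis {y_{ij}}_{i,j ∈ {1,2}} of ℂ⁴ and a unit vector p ∈ ℂ⁴ satisfying V y_{ij} = aᵢ ⊗ bⱼ for all i, j, V p = p_a ⊗ p_b, and the experimentally measured coincidence probabilities of the measurement AB on 'The Animal Acts', namely |⟨y_{11}, p⟩|² = 4/81, |⟨y_{12}, p⟩|² = 51/81, |⟨y_{21}, p⟩|² = 21/81 and |⟨y_{22}, p⟩|² = 5/81. In other words, since these probabilities do not factorize through their marginals (4/81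 ≠ (55/81)·(25/81)), there is no isomorphism of ℂ⁴ with ℂ²⊗ℂ² with respect to which both the state and the measurement AB are products; genuine entanglement is present. -/
open scoped InnerProductSpace

noncomputable section

lemma tp_inner (u v w z : EuclideanSpace ℂ (Fin 2)) :
    ⟪tp u w, tp v z⟫_ℂ = ⟪u, v⟫_ℂ * ⟪w, z⟫_ℂ := by
  simp [tp, PiLp.inner_apply, Fintype.sum_prod_type, Fin.sum_univ_two]
  ring

/-- there is no isomorphism `V` of ℂ⁴ with ℂ²⊗ℂ² with respect to which both the
state `p` and the measurement `AB` (with orthonormal eigenbasis `{y_{ij}}`) are products and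
which reproduces the experimentally measured coincidence probabilities of `AB` on
'The Animal Acts': `4/81, 51/81, 21/81, 5/81`. The probabilities do not factorize through
their marginals, so genuine entanglement is present. -/
theorem no_product_representation_of_AB_data :
    ¬ ∃ (V : EuclideanSpace ℂ (Fin 2 × Fin 2) ≃ₗᵢ[ℂ] EuclideanSpace ℂ (Fin 2 × Fin 2))
        (a b : Fin 2 → EuclideanSpace ℂ (Fin 2))
        (pa pb : EuclideanSpace ℂ (Fin 2))
        (y : Fin 2 → Fin 2 → EuclideanSpace ℂ (Fin 2 × Fin 2))
        (p : EuclideanSpace ℂ (Fin 2 × Fin 2)),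
      Orthonormal ℂ a ∧ Orthonormal ℂ b ∧ ‖pa‖ = 1 ∧ ‖pb‖ = 1 ∧
      Orthonormal ℂ (fun q : Fin 2 × Fin 2 => y q.1 q.2) ∧ ‖p‖ = 1 ∧
      (∀ i j : Fin 2, V (y i j) = tp (a i) (b j)) ∧
      V p = tp pa pb ∧
      ‖⟪y 0 0, p⟫_ℂ‖ ^ 2 = 4 / 81 ∧
      ‖⟪y 0 1, p⟫_ℂ‖ ^ 2 = 51 / 81 ∧
      ‖⟪y 1 0, p⟫_ℂ‖ ^ 2 = 21 / 81 ∧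
      ‖⟪y 1 1, p⟫_ℂ‖ ^ 2 = 5 / 81 := by
  rintro ⟨V, a, b, pa, pb, y, p, -, -, -, -, -, -, hV, hp, h00, h01, h10, h11⟩
  have key : ∀ i j : Fin 2,
      ‖⟪y i j, p⟫_ℂ‖ ^ 2 = ‖⟪a i, pa⟫_ℂ‖ ^ 2 * ‖⟪b j, pb⟫_ℂ‖ ^ 2 := by
    intro i j
    have : ⟪y i j, p⟫_ℂ = ⟪a i, pa⟫_ℂ * ⟪b j, pb⟫_ℂ := by
      rw [← V.inner_map_map, hV, hp, tp_inner]
    rw [this, norm_mul, mul_pow]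
  have e00 := h00; have e01 := h01; have e10 := h10; have e11 := h11
  rw [key] at e00 e01 e10 e11
  set r0 := ‖⟪a 0, pa⟫_ℂ‖ ^ 2
  set r1 := ‖⟪a 1, pa⟫_ℂ‖ ^ 2
  set s0 := ‖⟪b 0, pb⟫_ℂ‖ ^ 2
  set s1 := ‖⟪b 1, pb⟫_ℂ‖ ^ 2
  have : (4 / 81 : ℝ) * (5 / 81) = (51 / 81) * (21 / 81) := by
    rw [← e00, ← e11, ← e01, ← e10]; ring
  norm_num at this

end
end
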